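/- Under Assumptions A and B, let {xᵗ} be generated by SCP_ls and let Ω_x be the set of accumulation points of {xᵗ}. Then: (i) Ω_x ≠ ∅ and F is constant on Ω_x, equal to bar F* := lim_{t→∞} bar F(x^{t+1}, xᵗ, L_gᵗ); (ii) the sequence {F(xᵗ)} is nonincreasing and converges to bar F*. -/

import Mathlib

open Set Filter Topology Metric Bornology RealInnerProductSpace
open scoped Classical

noncomputable section

abbrev Euc (n : ℕ) : Type := EuclideanSpace ℝ (Fin n)

/-- Convex subdifferential of a real-valued function on an inner product space. -/
def ConvexSubdiff {H : Type*} [NormedAddCommGroup H] [InnerProductSpace ℝ H]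
    (P : H → ℝ) (x : H) : Set H :=
  {ζ | ∀ y, ⟪ζ, y - x⟫ ≤ P y - P x}

/-- Regular (Fréchet) subdifferential of an extended-real-valued function. -/
def RegularSubdiff {H : Type*} [NormedAddCommGroup H] [InnerProductSpace ℝ H]
    (h : H → EReal) (x : H) : Set H :=
  {ζ | h x ≠ ⊤ ∧ h x ≠ ⊥ ∧ ∀ ε : ℝ, 0 < ε →
    ∀ᶠ z in 𝓝 x,
      (((h x).toReal + ⟪ζ, z - x⟫ - ε * ‖z - x‖ : ℝ) : EReal) ≤ h z}

/-- Limiting (Mordukhovich) subdifferential. -/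
def LimSubdiff {H : Type*} [NormedAddCommGroup H] [InnerProductSpace ℝ H]
    (h : H → EReal) (x : H) : Set H :=
  {ζ | ∃ xs ζs : ℕ → H, (∀ k, ζs k ∈ RegularSubdiff h (xs k)) ∧
    Tendsto xs atTop (𝓝 x) ∧ Tendsto (fun k => h (xs k)) atTop (𝓝 (h x)) ∧
    Tendsto ζs atTop (𝓝 ζ)}

/-- The Kurdyka–Łojasiewicz property with exponent `α` at a point. -/
def KLExpAt {H : Type*} [NormedAddCommGroup H] [InnerProductSpace ℝ H]
    (h : H → EReal) (α : ℝ) (xhat : H) : Prop :=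
  ∃ a₀ : ℝ, 0 < a₀ ∧ ∃ a : ℝ, 0 < a ∧ ∃ V ∈ 𝓝 xhat, ∀ x ∈ V,
    h xhat < h x → h x < h xhat + (a : EReal) →
    1 ≤ a₀ * (1 - α) * ((h x).toReal - (h xhat).toReal) ^ (-α) *
        infDist 0 (LimSubdiff h x)

/-- The general Kurdyka–Łojasiewicz property at a point. -/
def KLAt {H : Type*} [NormedAddCommGroup H] [InnerProductSpace ℝ H]
    (h : H → EReal) (xhat : H) : Prop :=
  ∃ a : ℝ, 0 < a ∧ ∃ V ∈ 𝓝 xhat, ∃ φ φ' : ℝ → ℝ,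
    φ 0 = 0 ∧ ContinuousOn φ (Ico 0 a) ∧ ConcaveOn ℝ (Ico 0 a) φ ∧
    (∀ s ∈ Ioo 0 a, HasDerivAt φ (φ' s) s ∧ 0 < φ' s) ∧
    ∀ x ∈ V, h xhat < h x → h x < h xhat + (a : EReal) →
      1 ≤ φ' ((h x).toReal - (h xhat).toReal) * infDist 0 (LimSubdiff h x)

/-- The extended objective of problem (P). -/
def Fobj {n m : ℕ} (f P1 P2 : Euc n → ℝ) (g : Fin m → Euc n → ℝ) (x : Euc n) : EReal :=
  if ∀ i, g i x ≤ 0 then ((f x + P1 x - P2 x : ℝ) : EReal) else ⊤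

/-- The moving balls constraint functions. -/
def barG {n m : ℕ} (g : Fin m → Euc n → ℝ) (g' : Fin m → Euc n → Euc n)
    (x y : Euc n) (w : EuclideanSpace ℝ (Fin m)) (i : Fin m) : ℝ :=
  g i y + ⟪g' i y, x - y⟫ + w i / 2 * ‖x - y‖ ^ 2

/-- The space `ℝⁿ × ℝⁿ × ℝᵐ` with the (L²) Euclidean inner product. -/
abbrev PS (n m : ℕ) : Type :=
  WithLp 2 (Euc n × WithLp 2 (Euc n × EuclideanSpace ℝ (Fin m)))

/-- The potential function `bar F`. -/
def barF {n m : ℕ} (f P1 P2 : Euc n → ℝ) (g : Fin m → Euc n → ℝ)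
    (g' : Fin m → Euc n → Euc n)
    (p : PS n m) : EReal :=
  if ∀ i, barG g g' p.ofLp.1 p.ofLp.2.ofLp.1 p.ofLp.2.ofLp.2 i ≤ 0 then
    ((f p.ofLp.1 + P1 p.ofLp.1 - P2 p.ofLp.1 : ℝ) : EReal) else ⊤

/-- Stationary points of problem (P). -/
def IsStationaryPt {n m : ℕ} (f P1 P2 : Euc n → ℝ) (f' : Euc n → Euc n)
    (g : Fin m → Euc n → ℝ) (g' : Fin m → Euc n → Euc n) (x : Euc n) : Prop :=
  (∀ i, g i x ≤ 0) ∧ ∃ lam : Fin m → ℝ, (∀ i, 0 ≤ lam i) ∧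
    (∀ i, lam i * g i x = 0) ∧
    ∃ u ∈ ConvexSubdiff P1 x, ∃ v ∈ ConvexSubdiff P2 x,
      f' x + u - v + ∑ i, lam i • g' i x = 0

/-- Assumptions A (smoothness, Lipschitz gradients, level-boundedness) and B (MFCQ). -/
def AssumptionAB {n m : ℕ} (f P1 P2 : Euc n → ℝ) (f' : Euc n → Euc n)
    (g : Fin m → Euc n → ℝ) (g' : Fin m → Euc n → Euc n)
    (Lf : ℝ) (Lg : Fin m → ℝ) : Prop :=
  (∀ x, HasGradientAt f (f' x) x) ∧ LipschitzWith Lf.toNNReal f' ∧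
  ConvexOn ℝ univ P1 ∧ Continuous P1 ∧ ConvexOn ℝ univ P2 ∧ Continuous P2 ∧
  (∀ i x, HasGradientAt (g i) (g' i x) x) ∧
  (∀ i, LipschitzWith (Lg i).toNNReal (g' i)) ∧
  {x : Euc n | ∀ i, g i x ≤ 0}.Nonempty ∧
  (∀ σ : ℝ, IsBounded {x | Fobj f P1 P2 g x ≤ (σ : EReal)}) ∧
  (∀ x : Euc n, (∀ i, g i x ≤ 0) → ∃ d, ∀ i, g i x = 0 → ⟪g' i x, d⟫ < 0)

/-- The sequences generated by the SCP_ls algorithm. -/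
structure SCPlsSeq {n m : ℕ} (f P1 P2 : Euc n → ℝ) (f' : Euc n → Euc n)
    (g : Fin m → Euc n → ℝ) (g' : Fin m → Euc n → Euc n)
    (c Llo : ℝ) (x ξ : ℕ → Euc n) (Lfs : ℕ → ℝ)
    (Lgs : ℕ → EuclideanSpace ℝ (Fin m)) : Prop where
  feas0 : ∀ i, g i (x 0) ≤ 0
  subgrad : ∀ t, ξ t ∈ ConvexSubdiff P2 (x t)
  Lf_lb : ∀ t, Llo ≤ Lfs t
  Lg_lb : ∀ t i, Llo ≤ Lgs t i
  bdd : ∃ M : ℝ, ∀ t, Lfs t ≤ M ∧ ∀ i, Lgs t i ≤ M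
  feas_sub : ∀ t i, barG g g' (x (t + 1)) (x t) (Lgs t) i ≤ 0
  min : ∀ t z, (∀ i, barG g g' z (x t) (Lgs t) i ≤ 0) →
    ⟪f' (x t) - ξ t, x (t + 1) - x t⟫ + Lfs t / 2 * ‖x (t + 1) - x t‖ ^ 2
        + P1 (x (t + 1))
      ≤ ⟪f' (x t) - ξ t, z - x t⟫ + Lfs t / 2 * ‖z - x t‖ ^ 2 + P1 z
  uniq : ∀ t z, (∀ i, barG g g' z (x t) (Lgs t) i ≤ 0) →
    ⟪f' (x t) - ξ t, z - x t⟫ + Lfs t / 2 * ‖z - x t‖ ^ 2 + P1 z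
      ≤ ⟪f' (x t) - ξ t, x (t + 1) - x t⟫ + Lfs t / 2 * ‖x (t + 1) - x t‖ ^ 2
        + P1 (x (t + 1)) → z = x (t + 1)
  feas : ∀ t i, g i (x (t + 1)) ≤ 0
  descent : ∀ t, f (x (t + 1)) + P1 (x (t + 1)) - P2 (x (t + 1)) ≤
    f (x t) + P1 (x t) - P2 (x t) - c / 2 * ‖x (t + 1) - x t‖ ^ 2

/-- Cluster points of a sequence (limits of subsequences). -/
def seqClusterPts {X : Type*} [TopologicalSpace X] (u : ℕ → X) : Set X :=
  {p | ∃ φ : ℕ → ℕ, StrictMono φ ∧ Tendsto (u ∘ φ) atTop (𝓝 p)}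

/-- the set of accumulation points of the SCP_ls iterates is nonempty,
`F` is constant (equal to `bar F⋆`) on it, and `{F(x^t)}` is nonincreasing and
converges to `bar F⋆`. -/
theorem stmt11 {n m : ℕ} (f P1 P2 : Euc n → ℝ) (f' : Euc n → Euc n)
    (g : Fin m → Euc n → ℝ) (g' : Fin m → Euc n → Euc n)
    (Lf : ℝ) (Lg : Fin m → ℝ)
    (hAB : AssumptionAB f P1 P2 f' g g' Lf Lg)
    (c Llo : ℝ) (hc : 0 < c) (hLlo : 0 < Llo)
    (x ξ : ℕ → Euc n) (Lfs : ℕ → ℝ) (Lgs : ℕ → EuclideanSpace ℝ (Fin m))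
    (hseq : SCPlsSeq f P1 P2 f' g g' c Llo x ξ Lfs Lgs) :
    ∃ Fstar : ℝ,
      Tendsto (fun t => barF f P1 P2 g g' (WithLp.toLp 2 (x (t + 1), WithLp.toLp 2 (x t, Lgs t)))) atTop
        (𝓝 ((Fstar : ℝ) : EReal)) ∧
      (seqClusterPts x).Nonempty ∧
      (∀ p ∈ seqClusterPts x, Fobj f P1 P2 g p = ((Fstar : ℝ) : EReal)) ∧
      Antitone (fun t => Fobj f P1 P2 g (x t)) ∧
      Tendsto (fun t => Fobj f P1 P2 g (x t)) atTop (𝓝 ((Fstar : ℝ) : EReal)) := by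
  obtain ⟨hf, hLf, hP1c, hP1, hP2c, hP2, hg, hLg, hne, hlev, hmfcq⟩ := hAB
  set E : ℕ → ℝ := fun t => f (x t) + P1 (x t) - P2 (x t) with hE
  have hfeas : ∀ t i, g i (x t) ≤ 0 := by
    intro t
    cases t with
    | zero => exact hseq.feas0
    | succ t => exact hseq.feas t
  have hFobj : ∀ t, Fobj f P1 P2 g (x t) = ((E t : ℝ) : EReal) := by
    intro t; simp only [Fobj, if_pos (hfeas t)]; rfl
  have hEanti : Antitone E := by
    apply antitone_nat_of_succ_le
    intro t
    have h := hseq.descent t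
    have hnn : 0 ≤ c / 2 * ‖x (t + 1) - x t‖ ^ 2 :=
      mul_nonneg (by linarith) (sq_nonneg _)
    show f (x (t + 1)) + P1 (x (t + 1)) - P2 (x (t + 1)) ≤
      f (x t) + P1 (x t) - P2 (x t)
    linarith
  set S : Set (Euc n) := {y | Fobj f P1 P2 g y ≤ ((E 0 : ℝ) : EReal)} with hS
  have hmem : ∀ t, x t ∈ closure S := by
    intro t
    apply subset_closure
    show Fobj f P1 P2 g (x t) ≤ _
    rw [hFobj t]
    exact_mod_cast hEanti (Nat.zero_le t)
  have hScomp : IsCompact (closure S) :=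
    Metric.isCompact_of_isClosed_isBounded isClosed_closure (hlev (E 0)).closure
  have hFcont : Continuous (fun y : Euc n => f y + P1 y - P2 y) := by
    have hfc : Continuous f :=
      continuous_iff_continuousAt.mpr fun y => (hf y).continuousAt
    exact (hfc.add hP1).sub hP2
  have hbddBelow : BddBelow (range E) := by
    obtain ⟨B, hB⟩ := (hScomp.image hFcont).bddBelow
    refine ⟨B, ?_⟩
    rintro _ ⟨t, rfl⟩
    exact hB ⟨x t, hmem t, rfl⟩
  set Fstar : ℝ := ⨅ t, E t with hFstar
  have hEtend : Tendsto E atTop (𝓝 Fstar) := tendsto_atTop_ciInf hEanti hbddBelow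
  refine ⟨Fstar, ?_, ?_, ?_, ?_, ?_⟩
  · have h1 : ∀ t, barF f P1 P2 g g' (WithLp.toLp 2 (x (t + 1), WithLp.toLp 2 (x t, Lgs t))) = ((E (t + 1) : ℝ) : EReal) := by
      intro t; exact if_pos (hseq.feas_sub t)
    simp only [h1]
    exact (continuous_coe_real_ereal.tendsto _).comp
      (hEtend.comp (tendsto_add_atTop_nat 1))
  · obtain ⟨p, _, φ, hφ, hlim⟩ := hScomp.tendsto_subseq hmem
    exact ⟨p, φ, hφ, hlim⟩
  · rintro p ⟨φ, hφ, hlim⟩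
    have hgp : ∀ i, g i p ≤ 0 := by
      intro i
      have hgc : Continuous (g i) :=
        continuous_iff_continuousAt.mpr fun y => (hg i y).continuousAt
      have : Tendsto (fun k => g i (x (φ k))) atTop (𝓝 (g i p)) :=
        (hgc.tendsto p).comp hlim
      exact le_of_tendsto this (Eventually.of_forall fun k => hfeas (φ k) i)
    have h2 : Tendsto (fun k => E (φ k)) atTop (𝓝 (f p + P1 p - P2 p)) :=
      (hFcont.tendsto p).comp hlim
    have h3 : Tendsto (fun k => E (φ k)) atTop (𝓝 Fstar) :=
      hEtend.comp hφ.tendsto_atTop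
    have heq : f p + P1 p - P2 p = Fstar := tendsto_nhds_unique h2 h3
    simp [Fobj, hgp, heq]
  · intro s t hst
    show Fobj f P1 P2 g (x t) ≤ Fobj f P1 P2 g (x s)
    rw [hFobj s, hFobj t]
    exact_mod_cast hEanti hst
  · simp only [hFobj]
    exact (continuous_coe_real_ereal.tendsto _).comp hEtend
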